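/- For odd N = 2p−1 with bar notation ī = N−i+1, the full family of N² projectors P_{pp} = (pp)⊗(pp), 2P_{pi(ε)} = (pp)⊗((ii)+(īī)+ε((iī)+(īi))), 2P_{ip(ε)} = ((ii)+(īī)+ε((iī)+(īi)))⊗(pp), 2P_{ij(ε)} = (ii)⊗(jj)+(īī)⊗(j̄j̄)+ε((iī)⊗(jj̄)+(īi)⊗(j̄j)), 2P_{ij̄(ε)} = (ii)⊗(j̄j̄)+(īī)⊗(jj)+ε((iī)⊗(j̄j)+(īi)⊗(jj̄)), with i,j ranging over 1,…,p−1 and ε = ±1, satisfies P_α P_β = δ_{αβ} P_α and Σ_α P_α = I_{N²×N²}. -/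

import Mathlib

open Matrix Kronecker

/-- `(a b)`: the N×N elementary matrix with a single 1 in row `a`, column `b`
(1-based indices, as in the paper). -/
def elemN (N a b : ℕ) : Matrix (Fin N) (Fin N) ℝ :=
  fun c d => if (c : ℕ) + 1 = a ∧ (d : ℕ) + 1 = b then 1 else 0

/-- Index set for the nested family of projectors for `N = 2p-1`:
`(pp)`, `(p,i,ε)`, `(i,p,ε)`, `(i,j,ε)`, `(i,j̄,ε)` with `i,j ∈ {1,…,p-1}`, `ε = ±1`
(`Bool` encodes `ε`: `true ↦ +`, `false ↦ −`). -/
abbrev NestIdx (p : ℕ) : Type :=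
  Unit ⊕ (Fin (p-1) × Bool) ⊕ (Fin (p-1) × Bool) ⊕
    (Fin (p-1) × Fin (p-1) × Bool) ⊕ (Fin (p-1) × Fin (p-1) × Bool)

/-- sign of `ε` -/
def sgn (e : Bool) : ℝ := if e then 1 else -1

/-- The nested family of projectors for odd `N = 2p-1`.  For `k : Fin (p-1)` the
1-based index is `i = k+1` and `ī = N - i + 1 = 2p - i`. -/
noncomputable def Pnest (p : ℕ) : NestIdx p →
    Matrix (Fin (2*p-1) × Fin (2*p-1)) (Fin (2*p-1) × Fin (2*p-1)) ℝ :=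
  let N := 2*p-1
  let E := elemN N
  fun α =>
  match α with
  | Sum.inl _ => E p p ⊗ₖ E p p
  | Sum.inr (Sum.inl (k, e)) =>
      let i := (k : ℕ) + 1
      (1/2 : ℝ) • (E p p ⊗ₖ ((E i i + E (N-i+1) (N-i+1)) + sgn e • (E i (N-i+1) + E (N-i+1) i)))
  | Sum.inr (Sum.inr (Sum.inl (k, e))) =>
      let i := (k : ℕ) + 1
      (1/2 : ℝ) • (((E i i + E (N-i+1) (N-i+1)) + sgn e • (E i (N-i+1) + E (N-i+1) i)) ⊗ₖ E p p)
  | Sum.inr (Sum.inr (Sum.inr (Sum.inl (k, l, e)))) =>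
      let i := (k : ℕ) + 1
      let j := (l : ℕ) + 1
      (1/2 : ℝ) • ((E i i ⊗ₖ E j j + E (N-i+1) (N-i+1) ⊗ₖ E (N-j+1) (N-j+1))
        + sgn e • (E i (N-i+1) ⊗ₖ E j (N-j+1) + E (N-i+1) i ⊗ₖ E (N-j+1) j))
  | Sum.inr (Sum.inr (Sum.inr (Sum.inr (k, l, e)))) =>
      let i := (k : ℕ) + 1
      let j := (l : ℕ) + 1
      (1/2 : ℝ) • ((E i i ⊗ₖ E (N-j+1) (N-j+1) + E (N-i+1) (N-i+1) ⊗ₖ E j j)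
        + sgn e • (E i (N-i+1) ⊗ₖ E (N-j+1) j + E (N-i+1) i ⊗ₖ E j (N-j+1)))

section
open Finset

/-- indicator vector on pairs -/
def wv (N a b : ℕ) : Fin N × Fin N → ℝ :=
  fun x => if (x.1 : ℕ) + 1 = a ∧ (x.2 : ℕ) + 1 = b then 1 else 0

lemma kron_elem (N a b c d : ℕ) :
    elemN N a b ⊗ₖ elemN N c d = vecMulVec (wv N a c) (wv N b d) := by
  ext ⟨x, y⟩ ⟨x', y'⟩
  simp only [kroneckerMap_apply, elemN, wv, vecMulVec_apply]
  by_cases h1 : (x : ℕ) + 1 = a <;> by_cases h2 : (x' : ℕ) + 1 = b <;>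
    by_cases h3 : (y : ℕ) + 1 = c <;> by_cases h4 : (y' : ℕ) + 1 = d <;>
    simp [h1, h2, h3, h4]

lemma vmv_mul_vmv {I : Type*} [Fintype I] (a b c d : I → ℝ) :
    vecMulVec a b * vecMulVec c d = (b ⬝ᵥ c) • vecMulVec a d := by
  ext i j
  simp only [mul_apply, vecMulVec_apply, Matrix.smul_apply, dotProduct, smul_eq_mul, mul_sum]
  rw [Finset.sum_mul]
  apply Finset.sum_congr rfl
  intros; ring

lemma vmv_expand {I : Type*} (u v : I → ℝ) (s : ℝ) :
    vecMulVec (u + s • v) (u + s • v)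
      = vecMulVec u u + s • (vecMulVec u v + vecMulVec v u) + (s * s) • vecMulVec v v := by
  ext i j
  simp only [vecMulVec_apply, Pi.add_apply, Pi.smul_apply, Matrix.add_apply, Matrix.smul_apply, smul_eq_mul]
  ring

lemma dot_expand {I : Type*} [Fintype I] (u v u' v' : I → ℝ) (s t : ℝ) :
    (u + s • v) ⬝ᵥ (u' + t • v')
      = u ⬝ᵥ u' + t * (u ⬝ᵥ v') + s * (v ⬝ᵥ u') + (s * t) * (v ⬝ᵥ v') := by
  simp [add_dotProduct, dotProduct_add, smul_dotProduct, dotProduct_smul, smul_eq_mul]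
  ring

lemma wv_dot_self {N a b : ℕ} (ha1 : 1 ≤ a) (ha2 : a ≤ N) (hb1 : 1 ≤ b) (hb2 : b ≤ N) :
    wv N a b ⬝ᵥ wv N a b = 1 := by
  have hw : wv N a b = fun x => if x = (⟨a - 1, by omega⟩, ⟨b - 1, by omega⟩) then 1 else 0 := by
    funext x
    simp only [wv, Prod.ext_iff, Fin.ext_iff]
    have : (↑x.1 + 1 = a ∧ ↑x.2 + 1 = b) ↔ (↑x.1 = a - 1 ∧ ↑x.2 = b - 1) := by
      constructor <;> (rintro ⟨h1, h2⟩; constructor <;> omega)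
    simp [this]
  rw [hw]
  simp [dotProduct]

lemma wv_dot_ne {N a b c d : ℕ} (h : ¬(a = c ∧ b = d)) :
    wv N a b ⬝ᵥ wv N c d = 0 := by
  apply Finset.sum_eq_zero
  intro x _
  simp only [wv]
  split_ifs with h1 h2 <;> try simp
  exact absurd ⟨by omega, by omega⟩ h


/-- the representative 1-based pair of each projector -/
def uI (p : ℕ) : NestIdx p → ℕ × ℕ
  | Sum.inl _ => (p, p)
  | Sum.inr (Sum.inl (k, _)) => (p, (k : ℕ) + 1)
  | Sum.inr (Sum.inr (Sum.inl (k, _))) => ((k : ℕ) + 1, p)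
  | Sum.inr (Sum.inr (Sum.inr (Sum.inl (k, l, _)))) => ((k : ℕ) + 1, (l : ℕ) + 1)
  | Sum.inr (Sum.inr (Sum.inr (Sum.inr (k, l, _)))) => ((k : ℕ) + 1, 2 * p - ((l : ℕ) + 1))

noncomputable def sI (p : ℕ) : NestIdx p → ℝ
  | Sum.inl _ => 0
  | Sum.inr (Sum.inl (_, e)) => sgn e
  | Sum.inr (Sum.inr (Sum.inl (_, e))) => sgn e
  | Sum.inr (Sum.inr (Sum.inr (Sum.inl (_, _, e)))) => sgn e
  | Sum.inr (Sum.inr (Sum.inr (Sum.inr (_, _, e)))) => sgn e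

noncomputable def cI (p : ℕ) : NestIdx p → ℝ
  | Sum.inl _ => 1
  | _ => 1/2

noncomputable def vv (p : ℕ) (α : NestIdx p) : Fin (2*p-1) × Fin (2*p-1) → ℝ :=
  wv (2*p-1) (uI p α).1 (uI p α).2
    + sI p α • wv (2*p-1) (2*p - (uI p α).1) (2*p - (uI p α).2)

lemma uI_facts {p : ℕ} (hp : 2 ≤ p) (α : NestIdx p) :
    1 ≤ (uI p α).1 ∧ (uI p α).1 ≤ 2*p-1 ∧ 1 ≤ (uI p α).2 ∧ (uI p α).2 ≤ 2*p-1 ∧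
      (uI p α).1 ≤ p ∧ ((uI p α).1 = p → (uI p α).2 ≤ p) := by
  rcases α with _ | ⟨⟨k, e⟩⟩ | ⟨⟨k, e⟩⟩ | ⟨⟨k, l, e⟩⟩ | ⟨⟨k, l, e⟩⟩ <;>
    simp only [uI] <;> omega

lemma sgn_mul_self (e : Bool) : sgn e * sgn e = 1 := by cases e <;> norm_num [sgn]

/-- if the representatives agree but the indices differ, only ε differs -/
lemma uI_eq_cases {p : ℕ} (hp : 2 ≤ p) {α β : NestIdx p}
    (h : uI p α = uI p β) (hne : α ≠ β) :
    sI p α * sI p β = -1 ∧ uI p α ≠ (p, p) := by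
  rcases α with _ | ⟨⟨k, e⟩⟩ | ⟨⟨k, e⟩⟩ | ⟨⟨k, l, e⟩⟩ | ⟨⟨k, l, e⟩⟩ <;>
    rcases β with _ | ⟨⟨k', e'⟩⟩ | ⟨⟨k', e'⟩⟩ | ⟨⟨k', l', e'⟩⟩ | ⟨⟨k', l', e'⟩⟩ <;>
    simp only [uI, sI, Prod.mk.injEq, ne_eq, not_and] at h ⊢ <;>
    first
    | exact absurd rfl hne
    | (exfalso; omega)
    | (obtain ⟨h1, h2⟩ := h
       first
       | (have hk : k = k' := Fin.ext (by omega)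
          have hl : l = l' := Fin.ext (by omega)
          subst hk; subst hl
          have he : e ≠ e' := fun hE => hne (by rw [hE])
          exact ⟨by cases e <;> cases e' <;> simp_all [sgn], by omega⟩)
       | (have hk : k = k' := Fin.ext (by omega)
          subst hk
          have he : e ≠ e' := fun hE => hne (by rw [hE])
          exact ⟨by cases e <;> cases e' <;> simp_all [sgn], by omega⟩))


lemma Pnest_eq {p : ℕ} (hp : 2 ≤ p) (α : NestIdx p) :
    Pnest p α = cI p α • vecMulVec (vv p α) (vv p α) := by
  have h2p : 2*p - p = p := by omega
  rcases α with _ | ⟨⟨k, e⟩⟩ | ⟨⟨k, e⟩⟩ | ⟨⟨k, l, e⟩⟩ | ⟨⟨k, l, e⟩⟩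
  · simp only [Pnest, cI, sI, uI, vv, one_smul, zero_smul, add_zero, kron_elem]
  · have h1 : 2*p-1 - ((k:ℕ)+1) + 1 = 2*p - ((k:ℕ)+1) := by omega
    simp only [Pnest, cI, sI, uI, vv, h1, h2p]
    simp only [kronecker_add, kronecker_smul]
    simp only [kron_elem]
    rw [vmv_expand, sgn_mul_self, one_smul]
    module
  · have h1 : 2*p-1 - ((k:ℕ)+1) + 1 = 2*p - ((k:ℕ)+1) := by omega
    simp only [Pnest, cI, sI, uI, vv, h1, h2p]
    simp only [add_kronecker, smul_kronecker]
    simp only [kron_elem]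
    rw [vmv_expand, sgn_mul_self, one_smul]
    module
  · have h1 : 2*p-1 - ((k:ℕ)+1) + 1 = 2*p - ((k:ℕ)+1) := by omega
    have h1' : 2*p-1 - ((l:ℕ)+1) + 1 = 2*p - ((l:ℕ)+1) := by omega
    simp only [Pnest, cI, sI, uI, vv, h1, h1']
    simp only [kron_elem]
    rw [vmv_expand, sgn_mul_self, one_smul]
    module
  · have h1 : 2*p-1 - ((k:ℕ)+1) + 1 = 2*p - ((k:ℕ)+1) := by omega
    have h1' : 2*p-1 - ((l:ℕ)+1) + 1 = 2*p - ((l:ℕ)+1) := by omega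
    have h1'' : 2*p - (2*p - ((l:ℕ)+1)) = (l:ℕ)+1 := by omega
    simp only [Pnest, cI, sI, uI, vv, h1, h1', h1'']
    simp only [kron_elem]
    rw [vmv_expand, sgn_mul_self, one_smul]
    module

lemma vv_dot_ne {p : ℕ} (hp : 2 ≤ p) {α β : NestIdx p} (hne : α ≠ β) :
    vv p α ⬝ᵥ vv p β = 0 := by
  obtain ⟨ha1, ha2, ha3, ha4, ha5, ha6⟩ := uI_facts hp α
  obtain ⟨hb1, hb2, hb3, hb4, hb5, hb6⟩ := uI_facts hp β
  rw [vv, vv, dot_expand]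
  by_cases h : uI p α = uI p β
  · obtain ⟨hs, hpp⟩ := uI_eq_cases hp h hne
    have hpp' : ¬((uI p α).1 = p ∧ (uI p α).2 = p) := by
      simpa [Prod.ext_iff] using hpp
    have h1 : (uI p β).1 = (uI p α).1 := by rw [h]
    have h2 : (uI p β).2 = (uI p α).2 := by rw [h]
    rw [h1, h2]
    rw [wv_dot_self ha1 ha2 ha3 ha4,
        wv_dot_self (a := 2*p - (uI p α).1) (by omega) (by omega) (by omega) (by omega),
        wv_dot_ne (by omega), wv_dot_ne (by omega), hs]
    ring
  · have hne' : ¬((uI p α).1 = (uI p β).1 ∧ (uI p α).2 = (uI p β).2) := by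
      simpa [Prod.ext_iff] using h
    rw [wv_dot_ne (by omega), wv_dot_ne (by omega), wv_dot_ne (by omega),
        wv_dot_ne (by omega)]
    ring

lemma sI_cases {p : ℕ} (hp : 2 ≤ p) (α : NestIdx p) :
    (sI p α = 0 ∧ cI p α = 1) ∨
      (sI p α * sI p α = 1 ∧ cI p α = 1/2 ∧
        ¬((uI p α).1 = p ∧ (uI p α).2 = p)) := by
  rcases α with _ | ⟨⟨k, e⟩⟩ | ⟨⟨k, e⟩⟩ | ⟨⟨k, l, e⟩⟩ | ⟨⟨k, l, e⟩⟩
  · left; exact ⟨rfl, rfl⟩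
  all_goals
    right
    refine ⟨sgn_mul_self e, rfl, ?_⟩
    simp only [uI]
    omega

lemma cI_dot {p : ℕ} (hp : 2 ≤ p) (α : NestIdx p) :
    cI p α * cI p α * (vv p α ⬝ᵥ vv p α) = cI p α := by
  obtain ⟨ha1, ha2, ha3, ha4, ha5, ha6⟩ := uI_facts hp α
  rw [vv, dot_expand, wv_dot_self ha1 ha2 ha3 ha4,
      wv_dot_self (a := 2*p - (uI p α).1) (by omega) (by omega) (by omega) (by omega)]
  rcases sI_cases hp α with ⟨hs, hc⟩ | ⟨hs, hc, hpp⟩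
  · rw [hs, hc]; ring
  · rw [wv_dot_ne (by omega), wv_dot_ne (by omega), hs, hc]; ring

lemma part1 {p : ℕ} (hp : 2 ≤ p) (α β : NestIdx p) :
    Pnest p α * Pnest p β = if α = β then Pnest p α else 0 := by
  rw [Pnest_eq hp α, Pnest_eq hp β, smul_mul_assoc, mul_smul_comm, vmv_mul_vmv,
    smul_smul, smul_smul]
  by_cases hab : α = β
  · subst hab
    rw [if_pos rfl, cI_dot hp α]
  · rw [vv_dot_ne hp hab, if_neg hab]
    simp

lemma half_pair {I : Type*} (u v : I → ℝ) :
    (1/2 : ℝ) • vecMulVec (u + sgn true • v) (u + sgn true • v)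
      + (1/2 : ℝ) • vecMulVec (u + sgn false • v) (u + sgn false • v)
    = vecMulVec u u + vecMulVec v v := by
  ext i j
  simp only [vecMulVec_apply, Pi.add_apply, Pi.smul_apply, Matrix.add_apply, Matrix.smul_apply,
    smul_eq_mul, sgn]
  norm_num
  ring

lemma hsplit {M : Type*} [AddCommMonoid M] {p : ℕ} (hp : 2 ≤ p) (g : ℕ → M) :
    ∑ b ∈ Finset.range (2*p-1), g (b+1)
      = g p + ∑ y ∈ Finset.range (p-1), (g (y+1) + g (2*p-(y+1))) := by
  have h3 : ∑ y ∈ Finset.range (p-1), g (2*p-(y+1))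
      = ∑ y ∈ Finset.range (p-1), g (p+1+y) := by
    rw [← Finset.sum_range_reflect (fun i => g (p+1+i)) (p-1)]
    apply Finset.sum_congr rfl
    intro y hy
    have := Finset.mem_range.mp hy
    congr 1
    omega
  rw [Finset.sum_add_distrib, h3,
    show 2*p-1 = (p-1) + (1 + (p-1)) from by omega,
    Finset.sum_range_add, Finset.sum_range_add, Finset.sum_range_one]
  have e1 : p - 1 + 0 + 1 = p := by omega
  have e2 : ∀ i : ℕ, p - 1 + (1 + i) + 1 = p + 1 + i := fun i => by omega
  simp only [e1, e2]
  abel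

lemma gsum1 {p : ℕ} (hp : 2 ≤ p) :
    ∑ a ∈ Finset.range (2*p-1), ∑ b ∈ Finset.range (2*p-1),
        vecMulVec (wv (2*p-1) (a+1) (b+1)) (wv (2*p-1) (a+1) (b+1))
      = (1 : Matrix (Fin (2*p-1) × Fin (2*p-1)) (Fin (2*p-1) × Fin (2*p-1)) ℝ) := by
  ext z z'
  simp only [Matrix.sum_apply, vecMulVec_apply, one_apply]
  have hterm : ∀ a b : ℕ, wv (2*p-1) (a+1) (b+1) z * wv (2*p-1) (a+1) (b+1) z'
      = if b = (z.2 : ℕ) then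
          (if a = (z.1 : ℕ) then
            (if (z'.1 : ℕ) = (z.1 : ℕ) ∧ (z'.2 : ℕ) = (z.2 : ℕ) then (1:ℝ) else 0) else 0)
        else 0 := by
    intro a b
    simp only [wv]
    split_ifs <;> first | ring1 | (exfalso; omega)
  have hz1 : (z.1 : ℕ) ∈ Finset.range (2*p-1) := Finset.mem_range.mpr z.1.isLt
  have hz2 : (z.2 : ℕ) ∈ Finset.range (2*p-1) := Finset.mem_range.mpr z.2.isLt
  rw [Finset.sum_congr rfl fun a _ => Finset.sum_congr rfl fun b _ => hterm a b]
  rw [Finset.sum_congr rfl fun a (_ : a ∈ Finset.range (2*p-1)) =>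
    Finset.sum_ite_eq' (Finset.range (2*p-1)) ((z.2 : ℕ)) fun _ =>
      if a = (z.1 : ℕ) then
        (if (z'.1 : ℕ) = (z.1 : ℕ) ∧ (z'.2 : ℕ) = (z.2 : ℕ) then (1:ℝ) else 0) else 0]
  rw [Finset.sum_congr rfl fun a (_ : a ∈ Finset.range (2*p-1)) => if_pos hz2]
  rw [Finset.sum_ite_eq' (Finset.range (2*p-1)) ((z.1 : ℕ)), if_pos hz1]
  by_cases h : z = z'
  · subst h; simp
  · rw [if_neg h, if_neg]
    intro hc
    exact h (Prod.ext (Fin.ext hc.1.symm) (Fin.ext hc.2.symm))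

lemma final_abstract {M : Type*} [AddCommMonoid M] {p : ℕ} (hp : 2 ≤ p) (G : ℕ → ℕ → M) :
    G p p +
      ((∑ x : Fin (p-1), (G p (↑x + 1) + G p (2*p - (↑x + 1)))) +
        ((∑ x : Fin (p-1), (G (↑x + 1) p + G (2*p - (↑x + 1)) p)) +
          ((∑ x : Fin (p-1), ∑ y : Fin (p-1),
              (G (↑x + 1) (↑y + 1) + G (2*p - (↑x + 1)) (2*p - (↑y + 1)))) +
            ∑ x : Fin (p-1), ∑ y : Fin (p-1),
              (G (↑x + 1) (2*p - (↑y + 1)) + G (2*p - (↑x + 1)) (2*p - (2*p - (↑y + 1)))))))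
      = ∑ a ∈ Finset.range (2*p-1), ∑ b ∈ Finset.range (2*p-1), G (a+1) (b+1) := by
  have expand : ∀ c : ℕ, ∑ b ∈ Finset.range (2*p-1), G c (b+1)
      = G c p + ∑ y ∈ Finset.range (p-1), (G c (y+1) + G c (2*p-(y+1))) :=
    fun c => hsplit hp (G c)
  rw [Fin.sum_univ_eq_sum_range (fun x => G p (x + 1) + G p (2*p - (x + 1))) (p-1),
      Fin.sum_univ_eq_sum_range (fun x => G (x + 1) p + G (2*p - (x + 1)) p) (p-1),
      Fin.sum_univ_eq_sum_range (fun x => ∑ y : Fin (p-1),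
        (G (x + 1) (↑y + 1) + G (2*p - (x + 1)) (2*p - (↑y + 1)))) (p-1),
      Fin.sum_univ_eq_sum_range (fun x => ∑ y : Fin (p-1),
        (G (x + 1) (2*p - (↑y + 1)) + G (2*p - (x + 1)) (2*p - (2*p - (↑y + 1))))) (p-1)]
  rw [Finset.sum_congr rfl fun x (_ : x ∈ Finset.range (p-1)) =>
        Fin.sum_univ_eq_sum_range
          (fun y => G (x + 1) (y + 1) + G (2*p - (x + 1)) (2*p - (y + 1))) (p-1)]
  rw [Finset.sum_congr rfl fun x (_ : x ∈ Finset.range (p-1)) =>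
        Fin.sum_univ_eq_sum_range
          (fun y => G (x + 1) (2*p - (y + 1)) + G (2*p - (x + 1)) (2*p - (2*p - (y + 1)))) (p-1)]
  have fix5 : ∑ x ∈ Finset.range (p-1), ∑ y ∈ Finset.range (p-1),
        (G (x + 1) (2*p - (y + 1)) + G (2*p - (x + 1)) (2*p - (2*p - (y + 1))))
      = ∑ x ∈ Finset.range (p-1), ∑ y ∈ Finset.range (p-1),
        (G (x + 1) (2*p - (y + 1)) + G (2*p - (x + 1)) (y + 1)) := by
    refine Finset.sum_congr rfl fun x _ => Finset.sum_congr rfl fun y hy => ?_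
    have := Finset.mem_range.mp hy
    have hyy : 2*p - (2*p - (y + 1)) = y + 1 := by omega
    rw [hyy]
  rw [fix5]
  rw [hsplit hp (fun a => ∑ b ∈ Finset.range (2*p-1), G a (b+1))]
  simp only [expand]
  simp only [Finset.sum_add_distrib]
  abel

lemma part2 {p : ℕ} (hp : 2 ≤ p) :
    (∑ α : NestIdx p, Pnest p α)
      = (1 : Matrix (Fin (2*p-1) × Fin (2*p-1)) (Fin (2*p-1) × Fin (2*p-1)) ℝ) := by
  have h2p : 2*p - p = p := by omega
  simp only [Pnest_eq hp]
  simp only [Fintype.sum_sum_type, Fintype.sum_prod_type, Fintype.sum_bool, Fintype.sum_unique]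
  simp only [cI, sI, uI, vv]
  simp only [half_pair]
  simp only [h2p, one_smul, zero_smul, add_zero]
  exact (final_abstract hp
    (fun a b => vecMulVec (wv (2*p-1) a b) (wv (2*p-1) a b))).trans (gsum1 hp)

end

/-- The full family of `N²` projectors for odd `N = 2p-1` satisfies
`P_α P_β = δ_{αβ} P_α` and `Σ_α P_α = I`. -/

theorem Pnest_orthogonal_idempotent_complete (p : ℕ) (hp : 2 ≤ p) :
    (∀ α β : NestIdx p, Pnest p α * Pnest p β = if α = β then Pnest p α else 0) ∧
    (∑ α : NestIdx p, Pnest p α)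
      = (1 : Matrix (Fin (2*p-1) × Fin (2*p-1)) (Fin (2*p-1) × Fin (2*p-1)) ℝ) := by
  exact ⟨part1 hp, part2 hp⟩
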